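/- arXiv:1506.03792 — 4 statements merged into one kernel-verified Lean document; each statement's English description precedes it below -/
import Mathlib

section
/- (Sufficiency of the column sum rank for recovery, Theorem 2, part 1.) Let W ≥ 1, let ρ_0,…,ρ_{W−1} ∈ {0,…,n}, and for each 0 ≤ t ≤ W−1 let A*_t ∈ K^{n×ρ_t} be a matrix of rank ρ_t. If d_R(W−1) > nW − Σ_{t=0}^{W−1} ρ_t, then for every source sequence (s_0,…,s_{W−1}) with s_0 ≠ 0 there exists some 0 ≤ t ≤ W−1 with x_t·A*_t ≠ 0 (products taken over F via the inclusion K ⊆ F); hence by linearity s_0 is uniquely determined by the received sequence (x_0·A*_0,…,x_{W−1}·A*_{W−1}). -/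
open Matrix

/-- The rank of a vector over the extension field `F`: the `K`-dimension of the
`K`-subspace of `F` spanned by its entries. -/
noncomputable def vrank (K : Type*) [Field K] {F : Type*} [Field F] [Algebra K F]
    {n : ℕ} (x : Fin n → F) : ℕ :=
  Module.finrank K (Submodule.span K (Set.range x))

/-- Channel packet `x_t = ∑_{i=0}^{min(t,m)} s_{t-i} G_i` (with `G i = 0` for `i > m`). -/
noncomputable def packet {F : Type*} [Field F] {k n : ℕ}
    (G : ℕ → Matrix (Fin k) (Fin n) F) (s : ℕ → Fin k → F) (t : ℕ) : Fin n → F :=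
  ∑ i ∈ Finset.range (t + 1), Matrix.vecMul (s (t - i)) (G i)

/-- The `j`-th column sum rank distance. -/
noncomputable def dR (K : Type*) [Field K] {F : Type*} [Field F] [Algebra K F]
    {k n : ℕ} (G : ℕ → Matrix (Fin k) (Fin n) F) (j : ℕ) : ℕ :=
  sInf {d : ℕ | ∃ s : ℕ → Fin k → F, s 0 ≠ 0 ∧
    d = ∑ t ∈ Finset.range (j + 1), vrank K (packet G s t)}

/-- Key bound: if `x · A = 0` for a `K`-matrix `A` of full column rank `p`, then
`vrank K x ≤ n - p`. -/
lemma vrank_add_rank_le {K F : Type*} [Field K] [Field F] [Algebra K F] {n p : ℕ}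
    (x : Fin n → F) (A : Matrix (Fin n) (Fin p) K) (hA : A.rank = p)
    (h : Matrix.vecMul x (A.map (algebraMap K F)) = 0) :
    vrank K x + p ≤ n := by
  classical
  set f : (Fin n → K) →ₗ[K] F := Fintype.linearCombination K x with hf
  have hrange : LinearMap.range f = Submodule.span K (Set.range x) :=
    Fintype.range_linearCombination K x
  have hcol : ∀ j, (∑ i, A i j • x i) = 0 := by
    intro j
    have hj := congrFun h j
    simpa [Matrix.vecMul, dotProduct, Algebra.smul_def, mul_comm] using hj
  have hker : LinearMap.range A.mulVecLin ≤ LinearMap.ker f := by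
    rintro _ ⟨v, rfl⟩
    simp only [LinearMap.mem_ker, hf, Matrix.mulVecLin_apply]
    rw [Fintype.linearCombination_apply]
    have expand : (∑ i, (A.mulVec v) i • x i) = ∑ j, v j • (∑ i, A i j • x i) := by
      simp_rw [Matrix.mulVec, dotProduct, Finset.sum_smul, Finset.smul_sum,
        smul_smul, mul_comm]
      exact Finset.sum_comm
    rw [expand]
    simp [hcol]
  have hp : p ≤ Module.finrank K (LinearMap.ker f) := by
    rw [← hA]
    exact Submodule.finrank_mono hker
  have hrn : Module.finrank K (LinearMap.range f) + Module.finrank K (LinearMap.ker f)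
      = n := by
    rw [LinearMap.finrank_range_add_finrank_ker f, Module.finrank_fin_fun]
  have hv : vrank K x = Module.finrank K (LinearMap.range f) := by
    rw [hrange]; rfl
  omega

/-- Packets are additive-linear in the source sequence (difference version). -/
lemma packet_sub {F : Type*} [Field F] {k n : ℕ}
    (G : ℕ → Matrix (Fin k) (Fin n) F) (s s' : ℕ → Fin k → F) (t : ℕ) :
    packet G (fun u => s u - s' u) t = packet G s t - packet G s' t := by
  simp [packet, Matrix.sub_vecMul, Finset.sum_sub_distrib]

/-- Theorem 2, part 1: sufficiency of the column sum rank. If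
`d_R(W−1) > nW − Σ ρ_t`, then every codeword sequence with `s_0 ≠ 0` produces a nonzero
received packet somewhere in the window, and hence `s_0` is uniquely determined by the
received sequence. -/
theorem stmt1 (q M k n m : ℕ) (hq : IsPrimePow q)
    (K F : Type*) [Field K] [Fintype K] [Field F] [Algebra K F]
    (hK : Fintype.card K = q) (hM : Module.finrank K F = M)
    (hk : 1 ≤ k) (hkn : k < n)
    (G : ℕ → Matrix (Fin k) (Fin n) F)
    (hG0 : (G 0).rank = k) (hGz : ∀ i, m < i → G i = 0)
    (W : ℕ) (hW : 1 ≤ W) (ρ : Fin W → ℕ) (hρ : ∀ t, ρ t ≤ n)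
    (A : (t : Fin W) → Matrix (Fin n) (Fin (ρ t)) K)
    (hA : ∀ t, (A t).rank = ρ t)
    (hd : n * W - ∑ t, ρ t < dR K G (W - 1)) :
    (∀ s : ℕ → Fin k → F, s 0 ≠ 0 →
      ∃ t : Fin W, Matrix.vecMul (packet G s t) ((A t).map (algebraMap K F)) ≠ 0) ∧
    (∀ s s' : ℕ → Fin k → F,
      (∀ t : Fin W, Matrix.vecMul (packet G s t) ((A t).map (algebraMap K F)) =
        Matrix.vecMul (packet G s' t) ((A t).map (algebraMap K F))) → s 0 = s' 0) := by
  have part1 : ∀ s : ℕ → Fin k → F, s 0 ≠ 0 →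
      ∃ t : Fin W, Matrix.vecMul (packet G s t) ((A t).map (algebraMap K F)) ≠ 0 := by
    intro s hs
    by_contra hcon
    push_neg at hcon
    have hsum : ∀ t : Fin W, vrank K (packet G s t) + ρ t ≤ n := fun t =>
      vrank_add_rank_le _ _ (hA t) (hcon t)
    have hle : dR K G (W - 1) ≤ ∑ t : Fin W, vrank K (packet G s t) := by
      apply Nat.sInf_le
      refine ⟨s, hs, ?_⟩
      rw [Nat.sub_add_cancel hW, ← Fin.sum_univ_eq_sum_range]
    have htot : (∑ t : Fin W, vrank K (packet G s t)) + ∑ t, ρ t ≤ n * W := by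
      rw [← Finset.sum_add_distrib]
      calc ∑ t : Fin W, (vrank K (packet G s t) + ρ t)
          ≤ ∑ _t : Fin W, n := Finset.sum_le_sum fun t _ => hsum t
        _ = n * W := by simp [mul_comm]
    have : dR K G (W - 1) ≤ n * W - ∑ t, ρ t :=
      le_trans hle (Nat.le_sub_of_add_le htot)
    omega
  refine ⟨part1, ?_⟩
  intro s s' hss
  by_contra hne
  obtain ⟨t, ht⟩ := part1 (fun u => s u - s' u) (sub_ne_zero.mpr hne)
  apply ht
  rw [packet_sub, Matrix.sub_vecMul, hss t, sub_self]
end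

section
/- (Necessity of the column sum rank, Theorem 2, part 2.) Let W ≥ 1. There exist integers ρ_0,…,ρ_{W−1} ∈ {0,…,n} with Σ_{t=0}^{W−1} ρ_t = nW − d_R(W−1), matrices A*_t ∈ K^{n×ρ_t} of rank ρ_t for each 0 ≤ t ≤ W−1, and a source sequence (s_0,…,s_{W−1}) with s_0 ≠ 0, such that x_t·A*_t = 0 for every 0 ≤ t ≤ W−1 (so s_0 cannot be recovered from the received sequence). -/
open Matrix

/-- For any vector `x ∈ Fⁿ` there is a full-rank `K`-matrix with `n - vrank x` columns
annihilating `x`. -/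
lemma exists_annihilator (K : Type*) [Field K] {F : Type*} [Field F] [Algebra K F]
    {n : ℕ} (x : Fin n → F) :
    ∃ ρ : ℕ, ρ + vrank K x = n ∧
      ∃ A : Matrix (Fin n) (Fin ρ) K, A.rank = ρ ∧
        Matrix.vecMul x (A.map (algebraMap K F)) = 0 := by
  classical
  set φ : (Fin n → K) →ₗ[K] F := Fintype.linearCombination K x with hφ
  have hrange : LinearMap.range φ = Submodule.span K (Set.range x) := by
    simp [hφ]
  have hrn : Module.finrank K (LinearMap.range φ) + Module.finrank K (LinearMap.ker φ) = n := by
    simpa using LinearMap.finrank_range_add_finrank_ker φ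
  set ρ := Module.finrank K (LinearMap.ker φ) with hρdef
  have hv : vrank K x = Module.finrank K (LinearMap.range φ) := by
    rw [vrank, hrange]
  refine ⟨ρ, by omega, ?_⟩
  let b : Module.Basis (Fin ρ) K (LinearMap.ker φ) := Module.finBasis K (LinearMap.ker φ)
  let A : Matrix (Fin n) (Fin ρ) K := fun i j => (b j : Fin n → K) i
  refine ⟨A, ?_, ?_⟩
  · rw [Matrix.rank_eq_finrank_span_cols]
    have h1 : Set.range Aᵀ = (Subtype.val '' Set.range b : Set (Fin n → K)) := by
      ext v
      constructor
      · rintro ⟨j, rfl⟩; exact ⟨b j, ⟨j, rfl⟩, rfl⟩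
      · rintro ⟨w, ⟨j, rfl⟩, rfl⟩; exact ⟨j, rfl⟩
    have h2 : (Subtype.val '' Set.range b : Set (Fin n → K)) =
        (LinearMap.ker φ).subtype '' Set.range b := rfl
    rw [show Set.range A.col = Set.range Aᵀ from rfl, h1, h2, ← Submodule.map_span, b.span_eq, Submodule.map_top, Submodule.range_subtype]
  · funext j
    have hmem : (b j : Fin n → K) ∈ LinearMap.ker φ := (b j).2
    have hzero : φ (b j : Fin n → K) = 0 := hmem
    have : ∑ i, ((b j : Fin n → K) i) • x i = 0 := hzero
    calc Matrix.vecMul x (A.map (algebraMap K F)) j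
        = ∑ i, x i * algebraMap K F (A i j) := by
          simp [Matrix.vecMul, Matrix.map, dotProduct]
      _ = ∑ i, ((b j : Fin n → K) i) • x i := by
          refine Finset.sum_congr rfl fun i _ => ?_
          rw [Algebra.smul_def, mul_comm]
      _ = 0 := this

/-- Theorem 2, part 2: necessity of the column sum rank. There exist
column counts `ρ_t` with `Σ ρ_t = nW − d_R(W−1)`, full-rank matrices `A*_t ∈ K^{n×ρ_t}`,
and a source sequence with `s_0 ≠ 0` whose received packets are all zero. -/
theorem stmt2 (q M k n m : ℕ) (hq : IsPrimePow q)
    (K F : Type*) [Field K] [Fintype K] [Field F] [Algebra K F]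
    (hK : Fintype.card K = q) (hM : Module.finrank K F = M)
    (hk : 1 ≤ k) (hkn : k < n)
    (G : ℕ → Matrix (Fin k) (Fin n) F)
    (hG0 : (G 0).rank = k) (hGz : ∀ i, m < i → G i = 0)
    (W : ℕ) (hW : 1 ≤ W) :
    ∃ ρ : Fin W → ℕ, (∀ t, ρ t ≤ n) ∧
      (∑ t, ρ t = n * W - dR K G (W - 1)) ∧
      ∃ A : (t : Fin W) → Matrix (Fin n) (Fin (ρ t)) K,
        (∀ t, (A t).rank = ρ t) ∧
        ∃ s : ℕ → Fin k → F, s 0 ≠ 0 ∧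
          ∀ t : Fin W, Matrix.vecMul (packet G s t) ((A t).map (algebraMap K F)) = 0 := by
  classical
  -- the defining set of `dR` is nonempty
  have hne : {d : ℕ | ∃ s : ℕ → Fin k → F, s 0 ≠ 0 ∧
      d = ∑ t ∈ Finset.range ((W - 1) + 1), vrank K (packet G s t)}.Nonempty := by
    refine ⟨_, fun _ _ => 1, ?_, rfl⟩
    intro h
    have := congrFun h ⟨0, hk⟩
    simp at this
  have hmem := Nat.sInf_mem hne
  obtain ⟨s, hs0, hsum⟩ := hmem
  have hW1 : (W - 1) + 1 = W := Nat.succ_pred_eq_of_pos hW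
  rw [hW1] at hsum
  -- build annihilators for each packet
  have H : ∀ t : Fin W, ∃ ρ : ℕ, ρ + vrank K (packet G s t) = n ∧
      ∃ A : Matrix (Fin n) (Fin ρ) K, A.rank = ρ ∧
        Matrix.vecMul (packet G s t) (A.map (algebraMap K F)) = 0 :=
    fun t => exists_annihilator K (packet G s t)
  choose ρ hρ A hArank hAzero using H
  have hle : ∀ t, ρ t ≤ n := fun t => Nat.le.intro (hρ t)
  refine ⟨ρ, hle, ?_, A, hArank, s, hs0, hAzero⟩
  have hsum' : ∑ t ∈ Finset.range W, vrank K (packet G s t) =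
      ∑ t : Fin W, vrank K (packet G s t) :=
    (Fin.sum_univ_eq_sum_range _ _).symm
  have htot : ∑ t : Fin W, (ρ t + vrank K (packet G s t)) = ∑ _t : Fin W, n :=
    Finset.sum_congr rfl fun t _ => hρ t
  rw [Finset.sum_add_distrib] at htot
  simp only [Finset.sum_const, Finset.card_univ, Fintype.card_fin, smul_eq_mul] at htot
  have hd : dR K G (W - 1) = ∑ t : Fin W, vrank K (packet G s t) := by
    simp only [dR, hW1]
    exact hsum.trans hsum'
  have hfin : ∑ t, ρ t + dR K G (W - 1) = n * W := by
    rw [hd, mul_comm]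
    exact htot
  exact Nat.eq_sub_of_add_eq hfin
end

section
/- (Theorem 1, Gabidulin.) Let 1 ≤ k ≤ n ≤ M and let G ∈ F^{k×n} be the generator matrix of a maximum rank distance code, i.e. rank(s·G) ≥ n−k+1 for every nonzero row vector s ∈ F^k. Then for every matrix A ∈ K^{n×k} of rank k, the k×k matrix G·A over F (A regarded over F via the inclusion K ⊆ F) is invertible. -/
open Matrix

/-- Theorem 1, Gabidulin: if `G` generates a maximum rank distance code
(`rank(s·G) ≥ n−k+1` for all nonzero `s`), then `G·A` is invertible for every full-rank
`A ∈ K^{n×k}`. -/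
theorem stmt8 (q M k n : ℕ) (hq : IsPrimePow q)
    (K F : Type*) [Field K] [Fintype K] [Field F] [Algebra K F]
    (hK : Fintype.card K = q) (hM : Module.finrank K F = M)
    (hk : 1 ≤ k) (hkn : k ≤ n) (hnM : n ≤ M)
    (G : Matrix (Fin k) (Fin n) F)
    (hG : ∀ s : Fin k → F, s ≠ 0 → n - k + 1 ≤ vrank K (Matrix.vecMul s G)) :
    ∀ A : Matrix (Fin n) (Fin k) K, A.rank = k →
      IsUnit (G * A.map (algebraMap K F)).det := by
  intro A hA
  rw [isUnit_iff_ne_zero]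
  intro hdet
  obtain ⟨s, hs, hsv⟩ := Matrix.exists_vecMul_eq_zero_iff.mpr hdet
  set y : Fin n → F := Matrix.vecMul s G with hy
  have hyA : Matrix.vecMul y (A.map (algebraMap K F)) = 0 := by
    rw [hy, Matrix.vecMul_vecMul, hsv]
  -- the K-linear map
  set φ : (Fin n → K) →ₗ[K] F := Fintype.linearCombination K y with hφ
  have hrange : LinearMap.range φ = Submodule.span K (Set.range y) :=
    Fintype.range_linearCombination K y
  -- columns of A are in the kernel
  have hcol : LinearMap.range A.mulVecLin ≤ LinearMap.ker φ := by
    rw [Matrix.range_mulVecLin, Submodule.span_le]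
    rintro _ ⟨j, rfl⟩
    simp only [SetLike.mem_coe, LinearMap.mem_ker, hφ,
      Fintype.linearCombination_apply]
    have := congrFun hyA j
    simpa [Matrix.vecMul, dotProduct, Algebra.smul_def, mul_comm] using this
  have hker : k ≤ Module.finrank K (LinearMap.ker φ) := by
    have := Submodule.finrank_mono hcol
    rwa [← Matrix.rank, hA] at this
  have hrn : Module.finrank K (LinearMap.range φ) + Module.finrank K (LinearMap.ker φ)
      = n := by
    rw [LinearMap.finrank_range_add_finrank_ker φ]
    simp
  have hvr : n - k + 1 ≤ vrank K y := hG s hs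
  have : vrank K y ≤ n - k := by
    unfold vrank
    rw [← hrange]
    omega
  omega
end

section
/- (Block Hankel super-regular matrix; extension of Almeida et al. to arbitrary prime powers q.) Let n,m ≥ 1, let M = q^{n(m+2)−1}, and let α be a primitive element of F = F_{q^M}. Then the n(m+1)×n(m+1) block Hankel matrix T, whose (i,j) block (0 ≤ i,j ≤ m) is T_{i+j−m} if i+j ≥ m and the zero matrix otherwise, where T_l(r,s) = α^{[nl+r+s]} for 0 ≤ r,s ≤ n−1, is super-regular. -/
open Matrix Polynomial Finset

-- swap (Monge) inequality
lemma swap_ineq {q A A' B B' : ℕ} (hq : 2 ≤ q) (hA : A < A') (hB : B < B') :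
    q ^ (A + B') + q ^ (A' + B) < q ^ (A + B) + q ^ (A' + B') := by
  have h1 : q ^ A < q ^ A' := Nat.pow_lt_pow_right (by omega) hA
  have h2 : q ^ B < q ^ B' := Nat.pow_lt_pow_right (by omega) hB
  have e1 : q ^ (A + B') = q ^ A * q ^ B' := pow_add q A B'
  have e2 : q ^ (A' + B) = q ^ A' * q ^ B := pow_add q A' B
  have e3 : q ^ (A + B) = q ^ A * q ^ B := pow_add q A B
  have e4 : q ^ (A' + B') = q ^ A' * q ^ B' := pow_add q A' B'
  rw [e1, e2, e3, e4]
  nlinarith [h1, h2]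

lemma pow_geom_lt {q : ℕ} (hq : 2 ≤ q) (R : ℕ) :
    ∑ j ∈ Finset.range (R + 1), q ^ (2 * j) < q ^ (2 * R + 1) := by
  induction R with
  | zero => simpa using by omega
  | succ R ih =>
      rw [Finset.sum_range_succ]
      have h1 : q ^ (2 * R + 1) + q ^ (2 * (R + 1)) ≤ q ^ (2 * (R + 1) + 1) := by
        have : q ^ (2 * R + 1) * (1 + q) ≤ q ^ (2 * R + 1) * q ^ 2 := by
          apply Nat.mul_le_mul_left
          nlinarith
        calc q ^ (2 * R + 1) + q ^ (2 * (R + 1)) = q ^ (2 * R + 1) * 1 + q ^ (2 * R + 1) * q := by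
              rw [show 2 * (R+1) = (2*R+1) + 1 by ring, pow_succ]; ring
          _ ≤ q ^ (2 * R + 1) * q ^ 2 := by nlinarith
          _ = q ^ (2 * (R + 1) + 1) := by rw [← pow_add]; ring_nf
      omega

lemma W_bound {q R l : ℕ} (hq : 2 ≤ q) (a b : Fin l → ℕ)
    (hainj : Function.Injective a) (hbinj : Function.Injective b)
    (haR : ∀ i, a i ≤ R) (hbR : ∀ i, b i ≤ R) (σ : Equiv.Perm (Fin l)) :
    ∑ i, q ^ (a i + b (σ i)) < q ^ (2 * R + 1) := by
  have key : ∀ (f : Fin l → ℕ), Function.Injective f → (∀ i, f i ≤ R) →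
      ∑ i, q ^ (2 * f i) ≤ ∑ j ∈ Finset.range (R + 1), q ^ (2 * j) := by
    intro f hf hfR
    have : ∑ i, q ^ (2 * f i) = ∑ j ∈ Finset.univ.image f, q ^ (2 * j) := by
      rw [Finset.sum_image (fun x _ y _ h => hf h)]
    rw [this]
    apply Finset.sum_le_sum_of_subset
    intro j hj
    simp only [Finset.mem_image] at hj
    obtain ⟨i, _, rfl⟩ := hj
    simp [Nat.lt_succ_iff, hfR i]
  have h1 : 2 * ∑ i, q ^ (a i + b (σ i)) ≤ ∑ i, q ^ (2 * a i) + ∑ i, q ^ (2 * b (σ i)) := by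
    rw [Finset.mul_sum, ← Finset.sum_add_distrib]
    apply Finset.sum_le_sum
    intro i _
    have : q ^ (a i + b (σ i)) = q ^ (a i) * q ^ (b (σ i)) := pow_add q _ _
    have e1 : q ^ (2 * a i) = q ^ (a i) * q ^ (a i) := by rw [two_mul, pow_add]
    have e2 : q ^ (2 * b (σ i)) = q ^ (b (σ i)) * q ^ (b (σ i)) := by rw [two_mul, pow_add]
    rw [this, e1, e2]
    have := two_mul_le_add_sq (q ^ (a i)) (q ^ (b (σ i)))
    simp only [sq] at this
    nlinarith [this]
  have h2 : ∑ i, q ^ (2 * b (σ i)) = ∑ i, q ^ (2 * b i) := Equiv.sum_comp σ fun i => q ^ (2 * b i)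
  have h3 := key a hainj haR
  have h4 := key b hbinj hbR
  have h5 := pow_geom_lt hq R
  omega

lemma core_max {q l : ℕ} (hq : 2 ≤ q) (a b : Fin l → ℕ)
    (ha : StrictMono a) (hb : StrictMono b)
    (P : Fin l → Fin l → Prop)
    (hP : ∀ ⦃i i' j j'⦄, i ≤ i' → j ≤ j' → P i j → P i' j')
    (σ0 : Equiv.Perm (Fin l)) (hσ0 : ∀ i, P i (σ0 i)) :
    ∃ σ : Equiv.Perm (Fin l), (∀ i, P i (σ i)) ∧
      ∀ τ : Equiv.Perm (Fin l), (∀ i, P i (τ i)) → τ ≠ σ →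
        (∑ i, q ^ (a i + b (τ i))) < ∑ i, q ^ (a i + b (σ i)) := by
  classical
  set W : Equiv.Perm (Fin l) → ℕ := fun σ => ∑ i, q ^ (a i + b (σ i)) with hW
  set S : Finset (Equiv.Perm (Fin l)) :=
    Finset.univ.filter (fun σ => ∀ i, P i (σ i)) with hSdef
  have hmemS : ∀ σ : Equiv.Perm (Fin l), σ ∈ S ↔ ∀ i, P i (σ i) := by
    intro σ; simp [hSdef]
  obtain ⟨σ, hσS, hσmax⟩ := S.exists_max_image W ⟨σ0, (hmemS σ0).2 hσ0⟩
  -- every maximizer is "greedy"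
  have greedy : ∀ σ' ∈ S, (∀ τ ∈ S, W τ ≤ W σ') →
      ∀ (t u : Fin l), P t u → (∀ s, s < t → σ' s ≠ u) → σ' t ≤ u := by
    intro σ' hσ'S hmax t u hPu hne
    by_contra hcon
    push_neg at hcon
    set s0 := σ'.symm u with hs0def
    have hσs0 : σ' s0 = u := σ'.apply_symm_apply u
    have hts0 : t < s0 := by
      rcases lt_trichotomy s0 t with h | h | h
      · exact absurd hσs0 (hne s0 h)
      · exact absurd (h ▸ hσs0) (by intro hh; rw [hh] at hcon; exact lt_irrefl _ hcon)
      · exact h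
    have htne : t ≠ s0 := ne_of_lt hts0
    set τ : Equiv.Perm (Fin l) := σ' * Equiv.swap t s0 with hτdef
    have hτt : τ t = u := by
      simp [hτdef, Equiv.Perm.mul_apply, Equiv.swap_apply_left, hσs0]
    have hτs0 : τ s0 = σ' t := by
      simp [hτdef, Equiv.Perm.mul_apply, Equiv.swap_apply_right]
    have hτx : ∀ x, x ≠ t → x ≠ s0 → τ x = σ' x := by
      intro x hx1 hx2
      simp [hτdef, Equiv.Perm.mul_apply, Equiv.swap_apply_of_ne_of_ne hx1 hx2]
    have hτS : τ ∈ S := by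
      rw [hmemS]
      intro i
      rcases eq_or_ne i t with rfl | hit
      · rw [hτt]; exact hPu
      rcases eq_or_ne i s0 with rfl | his0
      · rw [hτs0]
        exact hP hts0.le le_rfl ((hmemS σ').1 hσ'S t)
      · rw [hτx i hit his0]; exact (hmemS σ').1 hσ'S i
    have hsplit : ∀ g : Fin l → ℕ,
        ∑ i, g i = ∑ i ∈ (Finset.univ.erase t).erase s0, g i + g s0 + g t := by
      intro g
      have h1 : s0 ∈ Finset.univ.erase t := by
        simp [Finset.mem_erase, (ne_of_lt hts0).symm]
      rw [← Finset.sum_erase_add _ _ (Finset.mem_univ t),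
        ← Finset.sum_erase_add _ _ h1]
    have hWlt : W σ' < W τ := by
      rw [hW]
      simp only []
      rw [hsplit (fun i => q ^ (a i + b (σ' i))), hsplit (fun i => q ^ (a i + b (τ i)))]
      have hcong : ∑ i ∈ (Finset.univ.erase t).erase s0, q ^ (a i + b (τ i)) =
          ∑ i ∈ (Finset.univ.erase t).erase s0, q ^ (a i + b (σ' i)) := by
        apply Finset.sum_congr rfl
        intro x hx
        simp only [Finset.mem_erase] at hx
        rw [hτx x hx.2.1 hx.1]
      rw [hcong]
      have hkey : q ^ (a t + b (σ' t)) + q ^ (a s0 + b u) <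
          q ^ (a t + b u) + q ^ (a s0 + b (σ' t)) := by
        have := swap_ineq (A := a t) (A' := a s0) (B := b u) (B' := b (σ' t)) hq
          (ha hts0) (hb hcon)
        omega
      rw [hσs0, hτt, hτs0]
      omega
    exact absurd (hmax τ hτS) (not_le.mpr hWlt)
  -- uniqueness of maximizers
  have uniq : ∀ τ ∈ S, W τ = W σ → τ = σ := by
    intro τ hτS hWeq
    have hτmax : ∀ ρ ∈ S, W ρ ≤ W τ := fun ρ hρ => hWeq ▸ hσmax ρ hρ
    have key : ∀ k, ∀ t : Fin l, (t : ℕ) = k → τ t = σ t := by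
      intro k
      induction k using Nat.strong_induction_on with
      | _ k IH =>
        intro t ht
        have hIH : ∀ s : Fin l, s < t → τ s = σ s := by
          intro s hs
          exact IH s.val (by rw [← ht]; exact hs) s rfl
        have h1 : σ t ≤ τ t := by
          apply greedy σ hσS hσmax t (τ t) ((hmemS τ).1 hτS t)
          intro s hs hcontra
          rw [← hIH s hs] at hcontra
          exact (ne_of_lt hs) (τ.injective hcontra)
        have h2 : τ t ≤ σ t := by
          apply greedy τ hτS hτmax t (σ t) ((hmemS σ).1 hσS t)
          intro s hs hcontra
          rw [hIH s hs] at hcontra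
          exact (ne_of_lt hs) (σ.injective hcontra)
        exact le_antisymm h2 h1
    exact Equiv.ext fun t => key t.val t rfl
  refine ⟨σ, (hmemS σ).1 hσS, ?_⟩
  intro τ hτP hτne
  have hτS : τ ∈ S := (hmemS τ).2 hτP
  rcases lt_or_eq_of_le (hσmax τ hτS) with h | h
  · exact h
  · exact absurd (uniq τ hτS h) hτne

lemma lemA {p : ℕ} [Fact p.Prime] {F : Type*} [Field F] [Fintype F] [Algebra (ZMod p) F]
    {α : F} (hgen : ∀ x : F, x ≠ 0 → ∃ i : ℕ, x = α ^ i) {M : ℕ}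
    (hMle : M ≤ Module.finrank (ZMod p) F) (Q : Polynomial (ZMod p)) (hQ : Q ≠ 0)
    (hdeg : Q.natDegree < M) : Polynomial.aeval α Q ≠ 0 := by
  intro h0
  haveI : Module.Finite (ZMod p) F := Module.Finite.of_finite
  have hint : IsIntegral (ZMod p) α := IsIntegral.of_finite _ _
  have hadj : IntermediateField.adjoin (ZMod p) {α} = ⊤ := by
    rw [eq_top_iff]; intro x _
    rcases eq_or_ne x 0 with rfl | hx
    · exact zero_mem _
    · obtain ⟨i, rfl⟩ := hgen x hx
      exact pow_mem (IntermediateField.mem_adjoin_simple_self _ α) i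
  have h1 : (minpoly (ZMod p) α).natDegree = Module.finrank (ZMod p) F := by
    rw [← IntermediateField.adjoin.finrank hint, hadj, IntermediateField.finrank_top']
  have h2 := minpoly.degree_le_of_ne_zero (ZMod p) α hQ h0
  have h3 : (minpoly (ZMod p) α).natDegree ≤ Q.natDegree :=
    Polynomial.natDegree_le_natDegree h2
  omega



open Matrix

/-- A square matrix is super-regular if every square submatrix (selected by strictly
increasing row and column indices) whose Leibniz determinant expansion contains at least
one nonzero product term is invertible. -/
def SuperRegular {F : Type*} [Field F] {N : ℕ} (T : Matrix (Fin N) (Fin N) F) : Prop :=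
  ∀ (l : ℕ) (r c : Fin l → Fin N), StrictMono r → StrictMono c →
    (∃ σ : Equiv.Perm (Fin l), ∏ t, T (r t) (c (σ t)) ≠ 0) →
    IsUnit (T.submatrix r c).det

/-- The `n(m+1) × n(m+1)` block Hankel matrix whose `(i,j)` block is `T_{i+j−m}` when
`i+j ≥ m` and `0` otherwise, where `T_l(r,s) = α^{q^{nl+r+s}}`. -/
noncomputable def hankelT {F : Type*} [Field F] (q n m : ℕ) (α : F) :
    Matrix (Fin (n * (m + 1))) (Fin (n * (m + 1))) F :=
  Matrix.of fun x y =>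
    if m ≤ (x : ℕ) / n + (y : ℕ) / n then
      α ^ q ^ (n * ((x : ℕ) / n + (y : ℕ) / n - m) + (x : ℕ) % n + (y : ℕ) % n)
    else 0

/-- block Hankel super-regular matrix, extension of Almeida et al.: for
`M = q^{n(m+2)−1}` and `α` a primitive element of `F = F_{q^M}`, the block Hankel matrix
`T` is super-regular. -/
theorem stmt9 (q n m M : ℕ) (hq : IsPrimePow q) (hn : 1 ≤ n) (hm : 1 ≤ m)
    (hM : M = q ^ (n * (m + 2) - 1))
    (F : Type*) [Field F] [Fintype F] (hF : Fintype.card F = q ^ M)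
    (α : F) (hα : ∀ x : F, x ≠ 0 → ∃ i : ℕ, x = α ^ i) :
    SuperRegular (hankelT q n m α) := by
  classical
  have hq2 : 2 ≤ q := hq.two_le
  obtain ⟨s, d, hsp, hd, hsd⟩ := hq
  have hsprime : s.Prime := hsp.nat_prime
  -- characteristic and finrank
  haveI : CharP F (ringChar F) := ringChar.charP F
  set p := ringChar F with hpdef
  have hp : p.Prime := CharP.char_is_prime F p
  haveI : Fact p.Prime := ⟨hp⟩
  letI : Algebra (ZMod p) F := ZMod.algebra F p
  have hcard : Fintype.card F = p ^ Module.finrank (ZMod p) F := by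
    have := Module.card_eq_pow_finrank (K := ZMod p) (V := F)
    rwa [ZMod.card] at this
  have hMle : M ≤ Module.finrank (ZMod p) F := by
    have heq : p ^ Module.finrank (ZMod p) F = s ^ (d * M) := by
      rw [← hcard, hF, ← hsd, ← pow_mul]
    have hfr : 0 < Module.finrank (ZMod p) F := Module.finrank_pos
    have hps : p = s := by
      have h1 : p ∣ s ^ (d * M) := by
        rw [← heq]; exact dvd_pow_self p (by omega)
      exact (Nat.prime_dvd_prime_iff_eq hp hsprime).1 (hp.dvd_of_dvd_pow h1)
    have heq2 : p ^ Module.finrank (ZMod p) F = p ^ (d * M) := by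
      rw [heq, hps]
    have hfin : Module.finrank (ZMod p) F = d * M :=
      Nat.pow_right_injective hp.two_le heq2
    have hM1 : 1 ≤ M := by rw [hM]; exact Nat.one_le_pow _ _ (by omega)
    rw [hfin]; nlinarith
  have hM1 : 1 ≤ M := by rw [hM]; exact Nat.one_le_pow _ _ (by omega)
  -- main argument
  intro l r c hr hc hex
  set T := hankelT q n m α with hT
  set P : Fin l → Fin l → Prop := fun i j => m ≤ (c i : ℕ) / n + (r j : ℕ) / n with hPdef
  have hPmono : ∀ ⦃i i' j j' : Fin l⦄, i ≤ i' → j ≤ j' → P i j → P i' j' := by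
    intro i i' j j' hii hjj h
    have h1 : (c i : ℕ) ≤ (c i' : ℕ) := hc.monotone hii
    have h2 : (r j : ℕ) ≤ (r j' : ℕ) := hr.monotone hjj
    refine le_trans h ?_
    exact add_le_add (Nat.div_le_div_right h1) (Nat.div_le_div_right h2)
  -- supported permutation exists (column convention)
  obtain ⟨σh, hσh⟩ := hex
  have hσhsupp : ∀ t, m ≤ (r t : ℕ) / n + (c (σh t) : ℕ) / n := by
    intro t
    have hfac : T (r t) (c (σh t)) ≠ 0 := fun h0 =>
      hσh (Finset.prod_eq_zero (Finset.mem_univ t) h0)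
    by_contra hcon
    apply hfac
    simp only [hT, hankelT, Matrix.of_apply]
    rw [if_neg hcon]
  have hσ0 : ∀ i, P i ((σh⁻¹ : Equiv.Perm (Fin l)) i) := by
    intro i
    have h := hσhsupp (σh⁻¹ i)
    rw [show σh (σh⁻¹ i) = i from σh.apply_symm_apply i] at h
    rw [hPdef]; omega
  have hcval : StrictMono (fun i : Fin l => (c i : ℕ)) := fun i j hij => hc hij
  have hrval : StrictMono (fun j : Fin l => (r j : ℕ)) := fun i j hij => hr hij
  obtain ⟨σM, hσMP, hσMmax⟩ :=
    core_max hq2 (fun i => (c i : ℕ)) (fun j => (r j : ℕ)) hcval hrval P hPmono _ hσ0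
  -- weights
  set w : Equiv.Perm (Fin l) → ℕ :=
    fun σ => ∑ i, q ^ ((r (σ i) : ℕ) + (c i : ℕ) - n * m) with hwdef
  have hnm_le : ∀ x y : ℕ, m ≤ x / n + y / n → n * m ≤ x + y := by
    intro x y h
    have h1 : x / n * n ≤ x := Nat.div_mul_le_self x n
    have h2 : y / n * n ≤ y := Nat.div_mul_le_self y n
    have h3 : n * m ≤ n * (x / n + y / n) := Nat.mul_le_mul_left n h
    have h4 : n * (x / n + y / n) = x / n * n + y / n * n := by ring
    omega
  have hWf : ∀ σ : Equiv.Perm (Fin l), (∀ i, P i (σ i)) →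
      q ^ (n * m) * w σ = ∑ i, q ^ ((c i : ℕ) + (r (σ i) : ℕ)) := by
    intro σ hσ
    rw [hwdef, Finset.mul_sum]
    refine Finset.sum_congr rfl fun i _ => ?_
    rw [← pow_add]
    congr 1
    have hle := hnm_le (r (σ i) : ℕ) (c i : ℕ) (by have := hσ i; rw [hPdef] at this; omega)
    omega
  have hRb : ∀ σ : Equiv.Perm (Fin l), ∑ i, q ^ ((c i : ℕ) + (r (σ i) : ℕ)) <
      q ^ (2 * (n * (m + 1) - 1) + 1) := by
    intro σ
    apply W_bound hq2 _ _ (fun i j h => hcval.injective h) (fun i j h => hrval.injective h)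
    · intro i; have := (c i).is_lt; omega
    · intro i; have := (r i).is_lt; omega
  have hexp_eq : 2 * (n * (m + 1) - 1) + 1 = n * m + (n * (m + 2) - 1) := by
    have e1 : n * (m + 1) = n * m + n := by ring
    have e2 : n * (m + 2) = n * m + n + n := by ring
    omega
  have hwlt : ∀ σ : Equiv.Perm (Fin l), (∀ i, P i (σ i)) → w σ < M := by
    intro σ hσ
    have h1 : q ^ (n * m) * w σ < q ^ (n * m) * M := by
      rw [hWf σ hσ, hM, ← pow_add, ← hexp_eq]
      exact hRb σ
    exact lt_of_mul_lt_mul_left h1 (Nat.zero_le _)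
  -- product over a supported permutation
  have hentry : ∀ σ : Equiv.Perm (Fin l), (∀ i, P i (σ i)) →
      ∏ i, T (r (σ i)) (c i) = α ^ w σ := by
    intro σ hσ
    rw [hwdef]
    rw [← Finset.prod_pow_eq_pow_sum]
    refine Finset.prod_congr rfl fun i _ => ?_
    have hsupp : m ≤ (r (σ i) : ℕ) / n + (c i : ℕ) / n := by
      have := hσ i; rw [hPdef] at this; omega
    simp only [hT, hankelT, Matrix.of_apply]
    rw [if_pos hsupp]
    congr 1
    have hx := Nat.div_add_mod (r (σ i) : ℕ) n
    have hy := Nat.div_add_mod (c i : ℕ) n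
    have h3 : n * m ≤ n * ((r (σ i) : ℕ) / n + (c i : ℕ) / n) := Nat.mul_le_mul_left n hsupp
    have h4 : n * ((r (σ i) : ℕ) / n + (c i : ℕ) / n - m) =
        n * ((r (σ i) : ℕ) / n) + n * ((c i : ℕ) / n) - n * m := by
      rw [Nat.mul_sub, Nat.mul_add]
    have h5 : n * ((r (σ i) : ℕ) / n + (c i : ℕ) / n) =
        n * ((r (σ i) : ℕ) / n) + n * ((c i : ℕ) / n) := by ring
    congr 1
    omega
  -- the polynomial
  set S : Finset (Equiv.Perm (Fin l)) :=
    Finset.univ.filter (fun σ => ∀ i, P i (σ i)) with hSdef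
  set Qp : Polynomial (ZMod p) :=
    ∑ σ ∈ S, Polynomial.C ((Equiv.Perm.sign σ : ℤ) : ZMod p) * Polynomial.X ^ (w σ) with hQdef
  have haeval : Polynomial.aeval α Qp = ∑ σ ∈ S, ((Equiv.Perm.sign σ : ℤ) : F) * α ^ w σ := by
    rw [hQdef, map_sum]
    refine Finset.sum_congr rfl fun σ _ => ?_
    rw [_root_.map_mul, Polynomial.aeval_C, map_pow, Polynomial.aeval_X, map_intCast]
  have hdet2 : (T.submatrix r c).det = ∑ σ ∈ S, ((Equiv.Perm.sign σ : ℤ) : F) * α ^ w σ := by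
    rw [Matrix.det_apply,
      ← Finset.sum_filter_add_sum_filter_not Finset.univ (fun σ => ∀ i, P i (σ i))
        (fun σ => Equiv.Perm.sign σ • ∏ i, (T.submatrix r c) (σ i) i)]
    have hz : ∑ σ ∈ Finset.univ.filter (fun σ : Equiv.Perm (Fin l) => ¬ ∀ i, P i (σ i)),
        (Equiv.Perm.sign σ • ∏ i, (T.submatrix r c) (σ i) i) = 0 := by
      apply Finset.sum_eq_zero
      intro σ hσ
      simp only [Finset.mem_filter] at hσ
      obtain ⟨i, hi⟩ := not_forall.1 hσ.2
      have hzero : (T.submatrix r c) (σ i) i = 0 := by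
        simp only [Matrix.submatrix_apply, hT, hankelT, Matrix.of_apply]
        rw [if_neg (by rw [hPdef] at hi; omega)]
      exact smul_eq_zero_of_right _ (Finset.prod_eq_zero (f := fun j => (T.submatrix r c) (σ j) j) (Finset.mem_univ i) hzero)
    rw [hz, add_zero, ← hSdef]
    refine Finset.sum_congr rfl fun σ hσ => ?_
    rw [hSdef, Finset.mem_filter] at hσ
    have hprod : ∏ i, (T.submatrix r c) (σ i) i = α ^ w σ := by
      rw [← hentry σ hσ.2]
      exact Finset.prod_congr rfl fun i _ => rfl
    rw [hprod, Units.smul_def, zsmul_eq_mul]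
  -- nonzero coefficient at the maximal weight
  have hfilter : S.filter (fun σ => w σM = w σ) = {σM} := by
    ext τ
    simp only [Finset.mem_filter, Finset.mem_singleton, hSdef, Finset.mem_univ, true_and]
    constructor
    · rintro ⟨hτP, hwe⟩
      by_contra hne
      have hlt := hσMmax τ hτP hne
      have heqq : q ^ (n * m) * w σM = q ^ (n * m) * w τ := by rw [hwe]
      rw [hWf σM hσMP, hWf τ hτP] at heqq
      omega
    · rintro rfl; exact ⟨hσMP, rfl⟩
  have hcoeffM : Qp.coeff (w σM) = ((Equiv.Perm.sign σM : ℤ) : ZMod p) := by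
    rw [hQdef, Polynomial.finset_sum_coeff]
    rw [Finset.sum_congr rfl
      (fun σ _ => Polynomial.coeff_C_mul_X_pow ((Equiv.Perm.sign σ : ℤ) : ZMod p) (w σ) (w σM))]
    rw [Finset.sum_ite, Finset.sum_const_zero, add_zero, hfilter, Finset.sum_singleton]
  have hsgn_ne : ((Equiv.Perm.sign σM : ℤ) : ZMod p) ≠ 0 := by
    rcases Int.units_eq_one_or (Equiv.Perm.sign σM) with h | h <;> rw [h] <;> simp
  have hQne : Qp ≠ 0 := by
    intro h0; rw [h0, Polynomial.coeff_zero] at hcoeffM; exact hsgn_ne hcoeffM.symm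
  have hQdeg : Qp.natDegree < M := by
    have hle : Qp.natDegree ≤ M - 1 := by
      rw [hQdef]
      apply Polynomial.natDegree_sum_le_of_forall_le
      intro σ hσ
      rw [hSdef, Finset.mem_filter] at hσ
      have := hwlt σ hσ.2
      refine le_trans (Polynomial.natDegree_C_mul_X_pow_le _ _) (by omega)
    omega
  have hne0 := lemA hα hMle Qp hQne hQdeg
  rw [hdet2, ← haeval]
  exact isUnit_iff_ne_zero.mpr hne0
end
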